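/- Suppose r, Ω, ψ satisfy the toroidally symmetric Einstein–Klein-Gordon system (EKG1)–(EKG5) on U. Then the first renormalised Hawking mass ϖ₁ = 2rᵤrᵥr/Ω² + r³/(2l²) satisfies the transport equations ∂ᵤϖ₁ = −8πr²(rᵥ/Ω²)ψᵤ² + (4πr²a/l²)rᵤψ² and ∂ᵥϖ₁ = −8πr²(rᵤ/Ω²)ψᵥ² + (4πr²a/l²)rᵥψ². -/

import Mathlib

/-- Partial derivative in the first (`u`) coordinate. -/
noncomputable def pdu (f : ℝ × ℝ → ℝ) (p : ℝ × ℝ) : ℝ := deriv (fun u => f (u, p.2)) p.1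

/-- Partial derivative in the second (`v`) coordinate. -/
noncomputable def pdv (f : ℝ × ℝ → ℝ) (p : ℝ × ℝ) : ℝ := deriv (fun v => f (p.1, v)) p.2

section helpers
lemma hasDerivAt_slice_u {f : ℝ × ℝ → ℝ} {f' : (ℝ × ℝ) →L[ℝ] ℝ} {p : ℝ × ℝ}
    (hf : HasFDerivAt f f' p) : HasDerivAt (fun u => f (u, p.2)) (f' (1, 0)) p.1 := by
  have h : HasDerivAt (fun u : ℝ => (u, p.2)) ((1 : ℝ), (0 : ℝ)) p.1 :=
    (hasDerivAt_id p.1).prodMk (hasDerivAt_const _ _)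
  have h2 : HasFDerivAt f f' ((p.1, p.2)) := by rw [Prod.mk.eta]; exact hf
  exact h2.comp_hasDerivAt p.1 h

lemma hasDerivAt_slice_v {f : ℝ × ℝ → ℝ} {f' : (ℝ × ℝ) →L[ℝ] ℝ} {p : ℝ × ℝ}
    (hf : HasFDerivAt f f' p) : HasDerivAt (fun v => f (p.1, v)) (f' (0, 1)) p.2 := by
  have h : HasDerivAt (fun v : ℝ => (p.1, v)) ((0 : ℝ), (1 : ℝ)) p.2 :=
    (hasDerivAt_const _ _).prodMk (hasDerivAt_id p.2)
  have h2 : HasFDerivAt f f' ((p.1, p.2)) := by rw [Prod.mk.eta]; exact hf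
  exact h2.comp_hasDerivAt p.2 h

lemma pdu_eq_fderiv {f : ℝ × ℝ → ℝ} {p : ℝ × ℝ} (hf : DifferentiableAt ℝ f p) :
    pdu f p = fderiv ℝ f p (1, 0) := (hasDerivAt_slice_u hf.hasFDerivAt).deriv

lemma pdv_eq_fderiv {f : ℝ × ℝ → ℝ} {p : ℝ × ℝ} (hf : DifferentiableAt ℝ f p) :
    pdv f p = fderiv ℝ f p (0, 1) := (hasDerivAt_slice_v hf.hasFDerivAt).deriv

lemma pdu_congr_nhds {f g : ℝ × ℝ → ℝ} {p : ℝ × ℝ} (h : f =ᶠ[nhds p] g) :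
    pdu f p = pdu g p := by
  apply Filter.EventuallyEq.deriv_eq
  have ht : Filter.Tendsto (fun u : ℝ => (u, p.2)) (nhds p.1) (nhds p) := by
    rw [← Prod.mk.eta (p := p)]
    exact (continuous_id.prodMk continuous_const).tendsto p.1
  exact h.comp_tendsto ht

lemma pdv_congr_nhds {f g : ℝ × ℝ → ℝ} {p : ℝ × ℝ} (h : f =ᶠ[nhds p] g) :
    pdv f p = pdv g p := by
  apply Filter.EventuallyEq.deriv_eq
  have ht : Filter.Tendsto (fun v : ℝ => (p.1, v)) (nhds p.2) (nhds p) := by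
    rw [← Prod.mk.eta (p := p)]
    exact (continuous_const.prodMk continuous_id).tendsto p.2
  exact h.comp_tendsto ht

lemma hasFDerivAt_clm_apply {r : ℝ × ℝ → ℝ} {p : ℝ × ℝ}
    (hd : DifferentiableAt ℝ (fderiv ℝ r) p) (e : ℝ × ℝ) :
    HasFDerivAt (fun q => fderiv ℝ r q e)
      ((ContinuousLinearMap.apply ℝ ℝ e).comp (fderiv ℝ (fderiv ℝ r) p)) p :=
  (ContinuousLinearMap.apply ℝ ℝ e).hasFDerivAt.comp p hd.hasFDerivAt

lemma hasDerivAt_slice_u_snd {r : ℝ × ℝ → ℝ} {p : ℝ × ℝ}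
    (hd : DifferentiableAt ℝ (fderiv ℝ r) p) (e : ℝ × ℝ) :
    HasDerivAt (fun u => fderiv ℝ r (u, p.2) e)
      (fderiv ℝ (fderiv ℝ r) p (1, 0) e) p.1 :=
  hasDerivAt_slice_u (hasFDerivAt_clm_apply hd e)

lemma hasDerivAt_slice_v_snd {r : ℝ × ℝ → ℝ} {p : ℝ × ℝ}
    (hd : DifferentiableAt ℝ (fderiv ℝ r) p) (e : ℝ × ℝ) :
    HasDerivAt (fun v => fderiv ℝ r (p.1, v) e)
      (fderiv ℝ (fderiv ℝ r) p (0, 1) e) p.2 :=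
  hasDerivAt_slice_v (hasFDerivAt_clm_apply hd e)
end helpers

section C2
variable {U : Set (ℝ × ℝ)} {r : ℝ × ℝ → ℝ}

lemma diffAt_of_C2 (hU : IsOpen U) (hrC : ContDiffOn ℝ 2 r U) {p : ℝ × ℝ} (hp : p ∈ U) : DifferentiableAt ℝ r p :=
  ((hrC.differentiableOn (by norm_num)).differentiableAt (hU.mem_nhds hp))

lemma diffAt_fderiv_of_C2 (hU : IsOpen U) (hrC : ContDiffOn ℝ 2 r U) {p : ℝ × ℝ} (hp : p ∈ U) :
    DifferentiableAt ℝ (fderiv ℝ r) p := by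
  have h1 : ContDiffOn ℝ 1 (fderiv ℝ r) U := hrC.fderiv_of_isOpen hU (by norm_num)
  exact (h1.differentiableOn (by norm_num)).differentiableAt (hU.mem_nhds hp)

lemma pdu_eventually_eq (hU : IsOpen U) (hrC : ContDiffOn ℝ 2 r U) {p : ℝ × ℝ} (hp : p ∈ U) :
    pdu r =ᶠ[nhds p] fun q => fderiv ℝ r q (1, 0) := by
  filter_upwards [hU.mem_nhds hp] with q hq
  exact pdu_eq_fderiv (diffAt_of_C2 hU hrC hq)

lemma pdv_eventually_eq (hU : IsOpen U) (hrC : ContDiffOn ℝ 2 r U) {p : ℝ × ℝ} (hp : p ∈ U) :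
    pdv r =ᶠ[nhds p] fun q => fderiv ℝ r q (0, 1) := by
  filter_upwards [hU.mem_nhds hp] with q hq
  exact pdv_eq_fderiv (diffAt_of_C2 hU hrC hq)

lemma clairaut (hU : IsOpen U) (hrC : ContDiffOn ℝ 2 r U) {p : ℝ × ℝ} (hp : p ∈ U) : pdu (pdv r) p = pdv (pdu r) p := by
  have hsym := ((hrC.contDiffAt (hU.mem_nhds hp)).isSymmSndFDerivAt (by norm_num)) (0,1) (1,0)
  have h1 : pdu (pdv r) p = fderiv ℝ (fderiv ℝ r) p (1, 0) (0, 1) := by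
    rw [pdu_congr_nhds (pdv_eventually_eq hU hrC hp)]
    exact (hasDerivAt_slice_u_snd (diffAt_fderiv_of_C2 hU hrC hp) (0,1)).deriv
  have h2 : pdv (pdu r) p = fderiv ℝ (fderiv ℝ r) p (0, 1) (1, 0) := by
    rw [pdv_congr_nhds (pdu_eventually_eq hU hrC hp)]
    exact (hasDerivAt_slice_v_snd (diffAt_fderiv_of_C2 hU hrC hp) (1,0)).deriv
  rw [h1, h2, hsym]
end C2

lemma key_u (U : Set (ℝ × ℝ)) (hU : IsOpen U) (r Ω ψ : ℝ × ℝ → ℝ) (l a : ℝ)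
    (hl : l ≠ 0)
    (hrC : ContDiffOn ℝ 2 r U) (hΩC : ContDiffOn ℝ 2 Ω U)
    (hrpos : ∀ p ∈ U, 0 < r p) (hΩpos : ∀ p ∈ U, 0 < Ω p)
    (hEKG1 : ∀ p ∈ U, pdu (fun q => pdu r q / (Ω q) ^ 2) p
        = -(4 * Real.pi) * r p * (pdu ψ p) ^ 2 / (Ω p) ^ 2)
    (hEKG3 : ∀ p ∈ U, pdv (pdu r) p = -(pdu r p * pdv r p) / r p
        + (2 * Real.pi * a * r p / l ^ 2) * (Ω p) ^ 2 * (ψ p) ^ 2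
        - (3 / 4) * (r p / l ^ 2) * (Ω p) ^ 2)
    {p : ℝ × ℝ} (hp : p ∈ U) :
    pdu (fun q => 2 * pdu r q * pdv r q * r q / (Ω q) ^ 2 + (r q) ^ 3 / (2 * l ^ 2)) p
      = -(8 * Real.pi) * (r p) ^ 2 * (pdv r p / (Ω p) ^ 2) * (pdu ψ p) ^ 2
        + (4 * Real.pi * (r p) ^ 2 * a / l ^ 2) * pdu r p * (ψ p) ^ 2 := by
  have hrd2 : DifferentiableAt ℝ (fderiv ℝ r) p := diffAt_fderiv_of_C2 hU hrC hp
  have hΩne : (Ω p) ≠ 0 := (hΩpos p hp).ne'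
  have hrne : (r p) ≠ 0 := (hrpos p hp).ne'
  have hWne2 : (Ω p) ^ 2 ≠ 0 := pow_ne_zero _ hΩne
  have h1 : HasDerivAt (fun u => fderiv ℝ r (u, p.2) (1, 0))
      (fderiv ℝ (fderiv ℝ r) p (1, 0) (1, 0)) p.1 := hasDerivAt_slice_u_snd hrd2 (1, 0)
  have h2 : HasDerivAt (fun u => fderiv ℝ r (u, p.2) (0, 1))
      (fderiv ℝ (fderiv ℝ r) p (1, 0) (0, 1)) p.1 := hasDerivAt_slice_u_snd hrd2 (0, 1)
  have h3 : HasDerivAt (fun u => r (u, p.2)) (pdu r p) p.1 := by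
    rw [pdu_eq_fderiv (diffAt_of_C2 hU hrC hp)]
    exact hasDerivAt_slice_u (diffAt_of_C2 hU hrC hp).hasFDerivAt
  have h4 : HasDerivAt (fun u => Ω (u, p.2)) (pdu Ω p) p.1 := by
    rw [pdu_eq_fderiv (diffAt_of_C2 hU hΩC hp)]
    exact hasDerivAt_slice_u (diffAt_of_C2 hU hΩC hp).hasFDerivAt
  have hru : fderiv ℝ r p (1, 0) = pdu r p := (pdu_eq_fderiv (diffAt_of_C2 hU hrC hp)).symm
  have hrv : fderiv ℝ r p (0, 1) = pdv r p := (pdv_eq_fderiv (diffAt_of_C2 hU hrC hp)).symm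
  -- expand EKG1
  have e1raw : pdu (fun q => pdu r q / (Ω q) ^ 2) p
      = (fderiv ℝ (fderiv ℝ r) p (1, 0) (1, 0) * (Ω p) ^ 2
          - pdu r p * ((2 : ℕ) * (Ω p) ^ 1 * pdu Ω p)) / ((Ω p) ^ 2) ^ 2 := by
    have heq : (fun q => pdu r q / (Ω q) ^ 2)
        =ᶠ[nhds p] fun q => fderiv ℝ r q (1, 0) / (Ω q) ^ 2 := by
      filter_upwards [pdu_eventually_eq hU hrC hp] with q hq
      rw [hq]
    rw [pdu_congr_nhds heq]
    have := (h1.div (h4.pow 2) hWne2).deriv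
    rw [hru] at this
    exact this
  rw [hEKG1 p hp] at e1raw
  have hX : fderiv ℝ (fderiv ℝ r) p (1, 0) (1, 0)
      = (-(4 * Real.pi) * r p * (pdu ψ p) ^ 2 * Ω p + 2 * pdu r p * pdu Ω p) / Ω p := by
    push_cast at e1raw
    field_simp at e1raw
    have h3' : (Ω p) ^ 3 ≠ 0 := pow_ne_zero _ hΩne
    field_simp
    apply mul_right_cancel₀ h3'
    linear_combination (-(Ω p) ^ 3) * e1raw
  have hY : fderiv ℝ (fderiv ℝ r) p (1, 0) (0, 1) = -(pdu r p * pdv r p) / r p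
      + (2 * Real.pi * a * r p / l ^ 2) * (Ω p) ^ 2 * (ψ p) ^ 2
      - (3 / 4) * (r p / l ^ 2) * (Ω p) ^ 2 := by
    have hy1 : fderiv ℝ (fderiv ℝ r) p (1, 0) (0, 1) = pdv (pdu r) p := by
      rw [← clairaut hU hrC hp]
      rw [pdu_congr_nhds (pdv_eventually_eq hU hrC hp)]
      exact (hasDerivAt_slice_u_snd hrd2 (0, 1)).deriv.symm
    exact hy1.trans (hEKG3 p hp)
  -- derivative of the mass function
  have heqm : (fun q => 2 * pdu r q * pdv r q * r q / (Ω q) ^ 2 + (r q) ^ 3 / (2 * l ^ 2))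
      =ᶠ[nhds p] fun q =>
        2 * fderiv ℝ r q (1, 0) * fderiv ℝ r q (0, 1) * r q / (Ω q) ^ 2
          + (r q) ^ 3 / (2 * l ^ 2) := by
    filter_upwards [pdu_eventually_eq hU hrC hp, pdv_eventually_eq hU hrC hp] with q hq1 hq2
    rw [hq1, hq2]
  rw [pdu_congr_nhds heqm]
  have hnum : HasDerivAt (fun u => 2 * fderiv ℝ r (u, p.2) (1, 0)
      * fderiv ℝ r (u, p.2) (0, 1) * r (u, p.2)) _ p.1 := ((h1.const_mul 2).mul h2).mul h3
  have htot := (hnum.div (h4.pow 2) hWne2).add ((h3.pow 3).div_const (2 * l ^ 2))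
  refine htot.deriv.trans ?_
  rw [hru, hrv, hX, hY]
  push_cast
  simp only [Pi.pow_apply, Pi.mul_apply, Prod.mk.eta, hru, hrv]
  field_simp
  ring

lemma pdu_swap (f : ℝ × ℝ → ℝ) (p : ℝ × ℝ) : pdu (f ∘ Prod.swap) p = pdv f p.swap := rfl
lemma pdv_swap (f : ℝ × ℝ → ℝ) (p : ℝ × ℝ) : pdv (f ∘ Prod.swap) p = pdu f p.swap := rfl


/-- If `r, Ω, ψ` satisfy the toroidally symmetric Einstein–Klein-Gordon system
(EKG1)–(EKG5) on an open set `U`, then the first renormalised Hawking mass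
`ϖ₁ = 2rᵤrᵥr/Ω² + r³/(2l²)` satisfies the transport equations
`∂ᵤϖ₁ = −8πr²(rᵥ/Ω²)ψᵤ² + (4πr²a/l²)rᵤψ²` and
`∂ᵥϖ₁ = −8πr²(rᵤ/Ω²)ψᵥ² + (4πr²a/l²)rᵥψ²`. -/
theorem stmt_2 (U : Set (ℝ × ℝ)) (hU : IsOpen U)
    (r Ω ψ : ℝ × ℝ → ℝ)
    (l κ a g : ℝ) (hl : 0 < l) (hκ : κ ∈ Set.Ioo (0 : ℝ) 1)
    (ha : a = κ ^ 2 / 2 - 9 / 8) (hg : g = -3 / 2 + κ)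
    (hrC : ContDiffOn ℝ 2 r U) (hΩC : ContDiffOn ℝ 2 Ω U) (hψC : ContDiffOn ℝ 2 ψ U)
    (hrpos : ∀ p ∈ U, 0 < r p) (hΩpos : ∀ p ∈ U, 0 < Ω p)
    (hEKG1 : ∀ p ∈ U, pdu (fun q => pdu r q / (Ω q) ^ 2) p
        = -(4 * Real.pi) * r p * (pdu ψ p) ^ 2 / (Ω p) ^ 2)
    (hEKG2 : ∀ p ∈ U, pdv (fun q => pdv r q / (Ω q) ^ 2) p
        = -(4 * Real.pi) * r p * (pdv ψ p) ^ 2 / (Ω p) ^ 2)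
    (hEKG3 : ∀ p ∈ U, pdv (pdu r) p = -(pdu r p * pdv r p) / r p
        + (2 * Real.pi * a * r p / l ^ 2) * (Ω p) ^ 2 * (ψ p) ^ 2
        - (3 / 4) * (r p / l ^ 2) * (Ω p) ^ 2)
    (hEKG4 : ∀ p ∈ U, pdv (pdu (fun q => Real.log (Ω q))) p
        = -(4 * Real.pi) * pdu ψ p * pdv ψ p + (pdu r p * pdv r p) / (r p) ^ 2)
    (hEKG5 : ∀ p ∈ U, pdv (pdu ψ) p = -(pdu r p / r p) * pdv ψ p
        - (pdv r p / r p) * pdu ψ p - ((Ω p) ^ 2 * a / (2 * l ^ 2)) * ψ p) :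
    ∀ p ∈ U,
      pdu (fun q => 2 * pdu r q * pdv r q * r q / (Ω q) ^ 2 + (r q) ^ 3 / (2 * l ^ 2)) p
        = -(8 * Real.pi) * (r p) ^ 2 * (pdv r p / (Ω p) ^ 2) * (pdu ψ p) ^ 2
          + (4 * Real.pi * (r p) ^ 2 * a / l ^ 2) * pdu r p * (ψ p) ^ 2
      ∧
      pdv (fun q => 2 * pdu r q * pdv r q * r q / (Ω q) ^ 2 + (r q) ^ 3 / (2 * l ^ 2)) p
        = -(8 * Real.pi) * (r p) ^ 2 * (pdu r p / (Ω p) ^ 2) * (pdv ψ p) ^ 2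
          + (4 * Real.pi * (r p) ^ 2 * a / l ^ 2) * pdv r p * (ψ p) ^ 2 := by
  intro p hp
  constructor
  · exact key_u U hU r Ω ψ l a hl.ne' hrC hΩC hrpos hΩpos hEKG1 hEKG3 hp
  · -- swapped system
    have hswapC : ContDiff ℝ 2 (Prod.swap : ℝ × ℝ → ℝ × ℝ) := contDiff_snd.prodMk contDiff_fst
    have hU' : IsOpen (Prod.swap ⁻¹' U : Set (ℝ × ℝ)) := hU.preimage continuous_swap
    have hrC' : ContDiffOn ℝ 2 (r ∘ Prod.swap) (Prod.swap ⁻¹' U) :=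
      hrC.comp hswapC.contDiffOn (fun x hx => hx)
    have hΩC' : ContDiffOn ℝ 2 (Ω ∘ Prod.swap) (Prod.swap ⁻¹' U) :=
      hΩC.comp hswapC.contDiffOn (fun x hx => hx)
    have hp' : p.swap ∈ Prod.swap ⁻¹' U := by simpa using hp
    have key := key_u (Prod.swap ⁻¹' U) hU' (r ∘ Prod.swap) (Ω ∘ Prod.swap) (ψ ∘ Prod.swap)
      l a hl.ne' hrC' hΩC'
      (fun q hq => hrpos _ hq) (fun q hq => hΩpos _ hq)
      (fun q hq => hEKG2 q.swap hq)
      (fun q hq => by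
        have h0 : pdv (pdu (r ∘ Prod.swap)) q = pdu (pdv r) q.swap := rfl
        rw [h0, clairaut hU hrC hq, hEKG3 q.swap hq]
        simp only [pdu_swap, pdv_swap, Function.comp_apply]
        ring)
      hp'
    have hfun : (fun q => 2 * pdu r q * pdv r q * r q / (Ω q) ^ 2 + (r q) ^ 3 / (2 * l ^ 2))
        = (fun q => 2 * pdv r q * pdu r q * r q / (Ω q) ^ 2 + (r q) ^ 3 / (2 * l ^ 2)) := by
      funext q; ring
    rw [hfun]
    exact key
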